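/- Suppose (in the approximation setting with uniform norm bound and polynomial trace convergence) that 0 is not an eigenvalue of Δ, i.e. ker Δ = 0. Then limᵢ F_{Δᵢ}(0) = 0 = dim_π(ker Δ). More generally, if λ is not an eigenvalue of Δ, then limᵢ F_{Δᵢ}(λ) = F_Δ(λ). -/

import Mathlib

open MeasureTheory Filter Set
open scoped ENNReal

/-- Spectral density function `F_Δ(lam) = μ([0, lam])`. -/
noncomputable def sdf (μ : Measure ℝ) (lam : ℝ) : ℝ := (μ (Icc 0 lam)).toReal

section Aux

variable {ι : Type*} [Preorder ι] [Nonempty ι] [IsDirected ι (· ≤ ·)]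

private lemma integrable_of_supp (K : ℝ) (ν : Measure ℝ) [IsFiniteMeasure ν]
    (hs : ν (Icc 0 K)ᶜ = 0) {f : ℝ → ℝ} (hf : Continuous f) : Integrable f ν := by
  obtain ⟨C, hC⟩ := (isCompact_Icc (a := (0:ℝ)) (b := K)).exists_bound_of_continuousOn
    hf.continuousOn
  have hae : ∀ᵐ x ∂ν, x ∈ Icc 0 K := by
    rw [ae_iff]
    rw [← Set.compl_setOf]
    exact hs
  refine ⟨hf.aestronglyMeasurable, HasFiniteIntegral.of_bounded (C := C) ?_⟩
  filter_upwards [hae] with x hx using hC x hx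

private lemma key_tendsto (d : ℕ) (K : ℝ)
    (μ : Measure ℝ) (μi : ι → Measure ℝ)
    [IsFiniteMeasure μ] [∀ i, IsFiniteMeasure (μi i)]
    (hs : μ (Icc 0 K)ᶜ = 0) (hsi : ∀ i, (μi i) (Icc 0 K)ᶜ = 0)
    (hd : (μ Set.univ).toReal = d) (hdi : ∀ i, ((μi i) Set.univ).toReal = d)
    (hmom : ∀ p : Polynomial ℝ,
      Tendsto (fun i => ∫ x, p.eval x ∂(μi i)) atTop (nhds (∫ x, p.eval x ∂μ)))
    (lam : ℝ) (hatom : μ {lam} = 0) :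
    Tendsto (fun i => sdf (μi i) lam) atTop (nhds (sdf μ lam)) := by
  by_cases hd0 : (d : ℝ) = 0
  · -- degenerate case: all measures are zero
    have hμ : μ = 0 := by
      rw [← Measure.measure_univ_eq_zero]
      rw [← ENNReal.ofReal_toReal (measure_ne_top μ univ), hd, hd0]
      simp
    have hμi : ∀ i, μi i = 0 := by
      intro i
      rw [← Measure.measure_univ_eq_zero]
      rw [← ENNReal.ofReal_toReal (measure_ne_top (μi i) univ), hdi i, hd0]
      simp
    simp only [sdf, hμ, hμi]
    simpa using tendsto_const_nhds
  -- main case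
  have hdR : (0 : ℝ) < d := lt_of_le_of_ne (Nat.cast_nonneg d) (Ne.symm hd0)
  have hdN : d ≠ 0 := by exact_mod_cast fun h => hd0 (by simp [h])
  -- total masses as ℝ≥0∞
  have hμuniv : μ univ = (d : ℝ≥0∞) := by
    rw [← ENNReal.ofReal_toReal (measure_ne_top μ univ), hd, ENNReal.ofReal_natCast]
  have hμiuniv : ∀ i, (μi i) univ = (d : ℝ≥0∞) := fun i => by
    rw [← ENNReal.ofReal_toReal (measure_ne_top (μi i) univ), hdi i, ENNReal.ofReal_natCast]
  -- convergence of integrals of continuous functions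
  have hA : ∀ f : ℝ → ℝ, Continuous f →
      Tendsto (fun i => ∫ x, f x ∂(μi i)) atTop (nhds (∫ x, f x ∂μ)) := by
    intro f hf
    rw [Metric.tendsto_nhds]
    intro ε hε
    set ε' : ℝ := ε / (4 * (d + 1)) with hε'def
    have hε' : 0 < ε' := by positivity
    obtain ⟨p, hp⟩ := exists_polynomial_near_of_continuousOn 0 K f hf.continuousOn ε' hε'
    have hclose : ∀ (ν : Measure ℝ) [IsFiniteMeasure ν], ν (Icc 0 K)ᶜ = 0 →
        (ν univ).toReal = d → |(∫ x, f x ∂ν) - ∫ x, p.eval x ∂ν| ≤ ε' * d := by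
      intro ν _ hνs hνd
      have hif : Integrable f ν := integrable_of_supp K ν hνs hf
      have hip : Integrable (fun x => p.eval x) ν :=
        integrable_of_supp K ν hνs p.continuous_aeval
      rw [← integral_sub hif hip]
      have hae : ∀ᵐ x ∂ν, ‖f x - p.eval x‖ ≤ ε' := by
        have hmem : ∀ᵐ x ∂ν, x ∈ Icc 0 K := by
          rw [ae_iff, ← Set.compl_setOf]; exact hνs
        filter_upwards [hmem] with x hx
        have := hp x hx
        rw [Real.norm_eq_abs, abs_sub_comm]
        exact le_of_lt this
      have := norm_integral_le_of_norm_le_const (μ := ν) hae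
      rw [measureReal_def, hνd] at this
      simpa [Real.norm_eq_abs] using this
    have hmid := (Metric.tendsto_nhds.mp (hmom p)) (ε / 4) (by positivity)
    filter_upwards [hmid] with i hi
    have h1 := hclose (μi i) (hsi i) (hdi i)
    have h2 := hclose μ hs hd
    have hεd : ε' * d < ε / 4 := by
      rw [hε'def, div_mul_eq_mul_div]
      rw [div_lt_div_iff₀ (by positivity) (by positivity)]
      nlinarith
    have hdist : dist (∫ x, f x ∂(μi i)) (∫ x, f x ∂μ) ≤
        |(∫ x, f x ∂(μi i)) - ∫ x, p.eval x ∂(μi i)| +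
        dist (∫ x, p.eval x ∂(μi i)) (∫ x, p.eval x ∂μ) +
        |(∫ x, p.eval x ∂μ) - ∫ x, f x ∂μ| := by
      rw [Real.dist_eq, Real.dist_eq]
      have := abs_sub_abs_le_abs_sub (∫ x, f x ∂(μi i)) (∫ x, f x ∂μ)
      calc |(∫ x, f x ∂(μi i)) - ∫ x, f x ∂μ|
          = |((∫ x, f x ∂(μi i)) - ∫ x, p.eval x ∂(μi i)) +
            ((∫ x, p.eval x ∂(μi i)) - ∫ x, p.eval x ∂μ) +
            ((∫ x, p.eval x ∂μ) - ∫ x, f x ∂μ)| := by ring_nf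
        _ ≤ _ := by
            exact (abs_add_le _ _).trans (add_le_add_left (abs_add_le _ _) _)
    calc dist (∫ x, f x ∂(μi i)) (∫ x, f x ∂μ) ≤ _ := hdist
      _ < ε / 4 + ε / 4 + ε / 4 := by
          refine add_lt_add (add_lt_add (h1.trans_lt hεd) hi) ?_
          rw [abs_sub_comm]; exact h2.trans_lt hεd
      _ < ε := by linarith
  -- normalized probability measures
  have hdinv_ne_top : ((d : ℝ≥0∞))⁻¹ ≠ ⊤ := by
    simp [hdN]
  have hd_ne_top : ((d : ℝ≥0∞)) ≠ ⊤ := by simp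
  have hd_ne_zero : ((d : ℝ≥0∞)) ≠ 0 := by exact_mod_cast hdN
  have hprob : ∀ (ν : Measure ℝ), ν univ = (d : ℝ≥0∞) →
      IsProbabilityMeasure (((d : ℝ≥0∞))⁻¹ • ν) := by
    intro ν hν
    constructor
    rw [Measure.smul_apply, smul_eq_mul, hν, ENNReal.inv_mul_cancel hd_ne_zero hd_ne_top]
  haveI hPμ := hprob μ hμuniv
  haveI hPμi : ∀ i, IsProbabilityMeasure (((d : ℝ≥0∞))⁻¹ • (μi i)) :=
    fun i => hprob (μi i) (hμiuniv i)
  set ν : ProbabilityMeasure ℝ := ⟨((d : ℝ≥0∞))⁻¹ • μ, hPμ⟩ with hν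
  set νi : ι → ProbabilityMeasure ℝ :=
    fun i => ⟨((d : ℝ≥0∞))⁻¹ • (μi i), hPμi i⟩ with hνi
  have hweak : Tendsto νi atTop (nhds ν) := by
    rw [ProbabilityMeasure.tendsto_iff_forall_integral_tendsto]
    intro f
    have hsm : ∀ (m : Measure ℝ),
        (∫ ω, f ω ∂(((d : ℝ≥0∞))⁻¹ • m)) = (d : ℝ)⁻¹ * ∫ ω, f ω ∂m := by
      intro m
      rw [integral_smul_measure, ENNReal.toReal_inv, ENNReal.toReal_natCast, smul_eq_mul]
    simp only [hν, hνi]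
    simp only [ProbabilityMeasure.coe_mk, hsm]
    exact (hA f f.continuous).const_mul _
  -- portmanteau at Iic lam
  have hfr : (ν : Measure ℝ) (frontier (Iic lam)) = 0 := by
    rw [frontier_Iic]
    simp only [hν, ProbabilityMeasure.coe_mk, Measure.smul_apply, smul_eq_mul, hatom, mul_zero]
  have hport := ProbabilityMeasure.tendsto_measure_of_null_frontier_of_tendsto' hweak hfr
  -- identify Iic lam with Icc 0 lam
  have hIic : ∀ (m : Measure ℝ), m (Icc 0 K)ᶜ = 0 → m (Iic lam) = m (Icc 0 lam) := by
    intro m hm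
    refine le_antisymm ?_ (measure_mono (fun x hx => hx.2))
    have hsub : Iic lam ⊆ Icc 0 lam ∪ (Icc 0 K)ᶜ := by
      intro x hx
      by_cases h0 : (0 : ℝ) ≤ x
      · exact Or.inl ⟨h0, hx⟩
      · exact Or.inr (fun hxK => h0 hxK.1)
    calc m (Iic lam) ≤ m (Icc 0 lam ∪ (Icc 0 K)ᶜ) := measure_mono hsub
      _ ≤ m (Icc 0 lam) + m (Icc 0 K)ᶜ := measure_union_le _ _
      _ = m (Icc 0 lam) := by rw [hm, add_zero]
  have hport' : Tendsto (fun i => ((d : ℝ≥0∞))⁻¹ * (μi i) (Icc 0 lam)) atTop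
      (nhds (((d : ℝ≥0∞))⁻¹ * μ (Icc 0 lam))) := by
    have e1 : ∀ i, ((νi i : Measure ℝ)) (Iic lam) = ((d : ℝ≥0∞))⁻¹ * (μi i) (Icc 0 lam) := by
      intro i
      simp only [hνi, ProbabilityMeasure.coe_mk, Measure.smul_apply, smul_eq_mul]
      rw [hIic (μi i) (hsi i)]
    have e2 : ((ν : Measure ℝ)) (Iic lam) = ((d : ℝ≥0∞))⁻¹ * μ (Icc 0 lam) := by
      simp only [hν, ProbabilityMeasure.coe_mk, Measure.smul_apply, smul_eq_mul]
      rw [hIic μ hs]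
    rw [← e2]
    exact hport.congr e1
  have hne_top : ((d : ℝ≥0∞))⁻¹ * μ (Icc 0 lam) ≠ ⊤ :=
    ENNReal.mul_ne_top hdinv_ne_top (measure_ne_top μ _)
  have hreal := (ENNReal.tendsto_toReal hne_top).comp hport'
  have hreal' : Tendsto (fun i => (d : ℝ)⁻¹ * ((μi i) (Icc 0 lam)).toReal) atTop
      (nhds ((d : ℝ)⁻¹ * (μ (Icc 0 lam)).toReal)) := by
    have : ∀ x : ℝ≥0∞, (((d : ℝ≥0∞))⁻¹ * x).toReal = (d : ℝ)⁻¹ * x.toReal := by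
      intro x
      rw [ENNReal.toReal_mul, ENNReal.toReal_inv, ENNReal.toReal_natCast]
    simpa only [Function.comp_def, this] using hreal
  have := hreal'.const_mul (d : ℝ)
  simp only [← mul_assoc, mul_inv_cancel₀ hd0, one_mul] at this
  exact this

end Aux

/-- In the approximation setting (uniform norm bound, polynomial trace convergence):
if `lam` is not an eigenvalue of `Δ` (i.e. the spectral measure has no atom at `lam`),
then `limᵢ F_{Δᵢ}(lam) = F_Δ(lam)`.  In particular if `ker Δ = 0` (no atom at `0`),
then `limᵢ F_{Δᵢ}(0) = 0 = dim_π(ker Δ)`. -/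
theorem stmt_14 {ι : Type*} [Preorder ι] [Nonempty ι] [IsDirected ι (· ≤ ·)]
    (d : ℕ) (K : ℝ)
    (μ : Measure ℝ) (μi : ι → Measure ℝ)
    [IsFiniteMeasure μ] [∀ i, IsFiniteMeasure (μi i)]
    (hs : μ (Icc 0 K)ᶜ = 0) (hsi : ∀ i, (μi i) (Icc 0 K)ᶜ = 0)
    (hd : (μ Set.univ).toReal = d) (hdi : ∀ i, ((μi i) Set.univ).toReal = d)
    (hmom : ∀ p : Polynomial ℝ,
      Tendsto (fun i => ∫ x, p.eval x ∂(μi i)) atTop (nhds (∫ x, p.eval x ∂μ)))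
    (lam : ℝ) (hatom : μ {lam} = 0) :
    Tendsto (fun i => sdf (μi i) lam) atTop (nhds (sdf μ lam)) ∧
    (μ {(0 : ℝ)} = 0 →
      sdf μ 0 = 0 ∧ Tendsto (fun i => sdf (μi i) 0) atTop (nhds 0)) := by
  constructor
  · exact key_tendsto d K μ μi hs hsi hd hdi hmom lam hatom
  · intro h0
    have hsdf0 : sdf μ 0 = 0 := by
      simp [sdf, Icc_self, h0]
    refine ⟨hsdf0, ?_⟩
    have := key_tendsto d K μ μi hs hsi hd hdi hmom 0 h0
    rwa [hsdf0] at this
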